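/- Let n_C ≥ n_E be positive natural numbers, K_C an invertible n_C×n_C real matrix, K_E an invertible n_E×n_E real matrix, ρ ∈ ℝ, and let P be the n_E×n_C matrix [I_{n_E} 0] (i.e., P i j = 1 if j is the image of i under the canonical embedding Fin n_E → Fin n_C and 0 otherwise). Then the (n_C+n_E)×(n_C+n_E) block matrix M = [[K_C, ρ K_C Pᵀ], [ρ P K_C, ρ² P K_C Pᵀ + K_E]] is invertible with inverse N = [[K_C⁻¹ + ρ² Pᵀ K_E⁻¹ P, −ρ Pᵀ K_E⁻¹], [−ρ K_E⁻¹ P, K_E⁻¹]]; that is, M·N = I and N·M = I. -/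
import Mathlib


open Matrix

theorem mufi_block_inverse_nested_designs
    (nC nE : ℕ) (hnC : 0 < nC) (hnE : 0 < nE) (h : nE ≤ nC)
    (K_C : Matrix (Fin nC) (Fin nC) ℝ) (K_E : Matrix (Fin nE) (Fin nE) ℝ)
    (hC : IsUnit K_C.det) (hE : IsUnit K_E.det)
    (ρ : ℝ)
    (P : Matrix (Fin nE) (Fin nC) ℝ)
    (hP : ∀ i j, P i j = if Fin.castLE h i = j then 1 else 0) :
    let M : Matrix (Fin nC ⊕ Fin nE) (Fin nC ⊕ Fin nE) ℝ :=
      Matrix.fromBlocks K_C (ρ • (K_C * Pᵀ)) (ρ • (P * K_C))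
        (ρ ^ 2 • (P * K_C * Pᵀ) + K_E)
    let N : Matrix (Fin nC ⊕ Fin nE) (Fin nC ⊕ Fin nE) ℝ :=
      Matrix.fromBlocks (K_C⁻¹ + ρ ^ 2 • (Pᵀ * K_E⁻¹ * P)) (-(ρ • (Pᵀ * K_E⁻¹)))
        (-(ρ • (K_E⁻¹ * P))) K_E⁻¹
    M * N = 1 ∧ N * M = 1 := by
  intro M N
  have hC1 : K_C * K_C⁻¹ = 1 := Matrix.mul_nonsing_inv _ hC
  have hC2 : K_C⁻¹ * K_C = 1 := Matrix.nonsing_inv_mul _ hC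
  have hE1 : K_E * K_E⁻¹ = 1 := Matrix.mul_nonsing_inv _ hE
  have hE2 : K_E⁻¹ * K_E = 1 := Matrix.nonsing_inv_mul _ hE
  have hE1' : ∀ A : Matrix (Fin nE) (Fin nC) ℝ, K_E * (K_E⁻¹ * A) = A := fun A => by
    rw [← Matrix.mul_assoc, hE1, Matrix.one_mul]
  have hC2' : ∀ A : Matrix (Fin nC) (Fin nE) ℝ, K_C⁻¹ * (K_C * A) = A := fun A => by
    rw [← Matrix.mul_assoc, hC2, Matrix.one_mul]
  constructor <;>
  · show Matrix.fromBlocks _ _ _ _ * Matrix.fromBlocks _ _ _ _ = 1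
    rw [Matrix.fromBlocks_multiply, ← Matrix.fromBlocks_one]
    rw [Matrix.fromBlocks_inj]
    refine ⟨?_, ?_, ?_, ?_⟩ <;>
    · simp only [Matrix.mul_add, Matrix.add_mul, Matrix.mul_smul, Matrix.smul_mul,
        Matrix.mul_neg, Matrix.neg_mul, smul_smul, smul_neg, Matrix.mul_assoc, hC1, hC2,
        hE1, hE2, hE1', hC2', Matrix.mul_one, Matrix.one_mul, pow_two, neg_smul, one_smul,
        smul_add]
      module
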